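/- arXiv:2002.06804 — 2 statements merged into one kernel-verified Lean document; each statement's English description precedes it below -/
import Mathlib

section
/- If p ≤ 1/2 and t = 1/2, then for any nonnegative sequence (c_i) summing to 1, P(Σ c_i β_i ≥ 1/2) ≤ p + (1-p)p, with equality attained by c_1 = c_2 = 1/2; i.e., bold play on two equal stakes is optimal. -/
open MeasureTheory ProbabilityTheory

section BoldPlayAux
open Finset

noncomputable def Wfun (F : Finset ℕ → Bool) (s : Finset ℕ) (p : ℝ) : ℝ :=
  ∑ T ∈ s.powerset, if F T then p ^ T.card * (1-p) ^ (s.card - T.card) else 0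

lemma Wfun_rec {F : Finset ℕ → Bool} {s : Finset ℕ} {a : ℕ} (ha : a ∉ s) (p : ℝ) :
    Wfun F (insert a s) p
      = (1-p) * Wfun F s p + p * Wfun (fun T => F (insert a T)) s p := by
  unfold Wfun
  rw [Finset.sum_powerset_insert ha, Finset.mul_sum, Finset.mul_sum]
  congr 1
  · apply Finset.sum_congr rfl
    intro T hT
    rw [Finset.mem_powerset] at hT
    have hTc : T.card ≤ s.card := Finset.card_le_card hT
    have : (insert a s).card = s.card + 1 := Finset.card_insert_of_notMem ha
    rw [this]
    by_cases h : F T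
    · simp only [h, if_true]
      have : s.card + 1 - T.card = (s.card - T.card) + 1 := by omega
      rw [this, pow_succ]
      ring
    · simp [h]
  · apply Finset.sum_congr rfl
    intro T hT
    rw [Finset.mem_powerset] at hT
    have haT : a ∉ T := fun h => ha (hT h)
    have hc : (insert a T).card = T.card + 1 := Finset.card_insert_of_notMem haT
    have hsc : (insert a s).card = s.card + 1 := Finset.card_insert_of_notMem ha
    have hTc : T.card ≤ s.card := Finset.card_le_card hT
    by_cases h : F (insert a T)
    · simp only [h, if_true, hc, hsc]
      have : s.card + 1 - (T.card + 1) = s.card - T.card := by omega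
      rw [this, pow_succ]
      ring
    · simp [h]

lemma Wfun_diff (F : Finset ℕ → Bool) (s : Finset ℕ) :
    Differentiable ℝ (Wfun F s) := by
  unfold Wfun
  apply Differentiable.fun_sum
  intro T _
  by_cases h : F T
  · simp only [h, if_true]
    exact (differentiable_pow _).mul (((differentiable_const (1:ℝ)).sub differentiable_id).pow _)
  · simp only [h, if_false]
    exact differentiable_const 0

lemma Wfun_total (s : Finset ℕ) (p : ℝ) :
    Wfun (fun _ => true) s p = 1 := by
  classical
  induction s using Finset.induction_on with
  | empty => simp [Wfun]
  | @insert a s ha ih =>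
      rw [Wfun_rec ha]
      have : (fun T => (fun _ : Finset ℕ => true) (insert a T)) = (fun _ : Finset ℕ => true) := rfl
      rw [this, ih]
      ring

lemma Wfun_nonneg {F : Finset ℕ → Bool} {s : Finset ℕ} {p : ℝ} (h0 : 0 ≤ p) (h1 : p ≤ 1) :
    0 ≤ Wfun F s p := by
  apply Finset.sum_nonneg
  intro T _
  by_cases h : F T
  · simp only [h, if_true]
    exact mul_nonneg (pow_nonneg h0 _) (pow_nonneg (by linarith) _)
  · simp [h]

lemma Wfun_mono_family {F G : Finset ℕ → Bool} {s : Finset ℕ} {p : ℝ}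
    (h0 : 0 ≤ p) (h1 : p ≤ 1) (hFG : ∀ T, F T = true → G T = true) :
    Wfun F s p ≤ Wfun G s p := by
  apply Finset.sum_le_sum
  intro T _
  by_cases h : F T
  · rw [h, hFG T h]
  · simp only [h, if_false]
    by_cases h' : G T
    · simp only [h', if_true]
      exact mul_nonneg (pow_nonneg h0 _) (pow_nonneg (by linarith) _)
    · simp [h']

lemma Wfun_le_one {F : Finset ℕ → Bool} {s : Finset ℕ} {p : ℝ} (h0 : 0 ≤ p) (h1 : p ≤ 1) :
    Wfun F s p ≤ 1 := by
  calc Wfun F s p ≤ Wfun (fun _ => true) s p :=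
        Wfun_mono_family h0 h1 (fun T _ => rfl)
    _ = 1 := Wfun_total s p

lemma Wfun_key {F : Finset ℕ → Bool}
    (hF : ∀ ⦃T U : Finset ℕ⦄, T ⊆ U → F T = true → F U = true) (s : Finset ℕ)
    {p : ℝ} (h0 : 0 ≤ p) (h1 : p ≤ 1) :
    Wfun F s p * (1 - Wfun F s p) ≤ p * (1 - p) * deriv (Wfun F s) p := by
  classical
  induction s using Finset.induction_on generalizing F with
  | empty =>
      have hW : Wfun F ∅ = fun _ : ℝ => if F ∅ then 1 else 0 := by
        funext q; simp [Wfun]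
      rw [hW]
      by_cases h : F ∅ <;> simp [h]
  | @insert a s ha ih =>
      set G : Finset ℕ → Bool := fun T => F (insert a T) with hG
      have hGmono : ∀ ⦃T U : Finset ℕ⦄, T ⊆ U → G T = true → G U = true := by
        intro T U hTU hT
        exact hF (Finset.insert_subset_insert a hTU) hT
      have hrec : Wfun F (insert a s) = fun q => (1-q) * Wfun F s q + q * Wfun G s q := by
        funext q; exact Wfun_rec ha q
      set A := Wfun F s with hA
      set B := Wfun G s with hB
      have hDA : HasDerivAt A (deriv A p) p := ((Wfun_diff F s) p).hasDerivAt
      have hDB : HasDerivAt B (deriv B p) p := ((Wfun_diff G s) p).hasDerivAt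
      have hd1 : HasDerivAt (fun q : ℝ => (1-q) * A q)
          ((-1) * A p + (1-p) * deriv A p) p := by
        exact ((hasDerivAt_id p).const_sub 1).mul hDA
      have hd2 : HasDerivAt (fun q : ℝ => q * B q)
          (1 * B p + p * deriv B p) p := (hasDerivAt_id p).mul hDB
      have hd : HasDerivAt (Wfun F (insert a s))
          (((-1) * A p + (1-p) * deriv A p) + (1 * B p + p * deriv B p)) p := by
        rw [hrec]; exact hd1.add hd2
      have hdval : deriv (fun q : ℝ => (1-q) * A q + q * B q) p
          = (-1) * A p + (1-p) * deriv A p + (1 * B p + p * deriv B p) := by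
        rw [← hrec]; exact hd.deriv
      rw [hrec, hdval]
      show ((1-p) * A p + p * B p) * (1 - ((1-p) * A p + p * B p))
          ≤ p * (1-p) * ((-1) * A p + (1-p) * deriv A p + (1 * B p + p * deriv B p))
      have ihA := ih hF
      have ihB := ih hGmono
      have hAB : A p ≤ B p :=
        Wfun_mono_family h0 h1 (fun T hT => hF (Finset.subset_insert a T) hT)
      have hA0 : 0 ≤ A p := Wfun_nonneg h0 h1
      have hB1 : B p ≤ 1 := Wfun_le_one h0 h1
      have e1 : 0 ≤ (1-p) * (p * (1-p) * deriv A p - A p * (1 - A p)) :=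
        mul_nonneg (by linarith) (by linarith)
      have e2 : 0 ≤ p * (p * (1-p) * deriv B p - B p * (1 - B p)) :=
        mul_nonneg h0 (by linarith)
      have e3 : 0 ≤ p * (1-p) * (B p - A p) * (1 - (B p - A p)) := by
        apply mul_nonneg
        · apply mul_nonneg (mul_nonneg h0 (by linarith)) (by linarith)
        · nlinarith
      nlinarith [e1, e2, e3]

lemma Wfun_add_compl (F : Finset ℕ → Bool) (s : Finset ℕ) (p : ℝ) :
    Wfun F s p + Wfun (fun T => !(F T)) s p = 1 := by
  rw [← Wfun_total s p]
  unfold Wfun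
  rw [← Finset.sum_add_distrib]
  apply Finset.sum_congr rfl
  intro T _
  by_cases h : F T <;> simp [h]

lemma Wfun_pos {F : Finset ℕ → Bool} {s : Finset ℕ} {p : ℝ} (h0 : 0 < p) (h1 : p < 1)
    (hex : ∃ T ∈ s.powerset, F T = true) : 0 < Wfun F s p := by
  classical
  obtain ⟨T, hT, hFT⟩ := hex
  have hterm : (0:ℝ) < (if F T then p ^ T.card * (1-p) ^ (s.card - T.card) else 0) := by
    rw [hFT]
    simp only [if_true]
    exact mul_pos (pow_pos h0 _) (pow_pos (by linarith) _)
  calc (0:ℝ) < (if F T then p ^ T.card * (1-p) ^ (s.card - T.card) else 0) := hterm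
    _ ≤ Wfun F s p := by
        apply Finset.single_le_sum (f := fun T =>
          if F T then p ^ T.card * (1-p) ^ (s.card - T.card) else 0) _ hT
        intro U _
        by_cases h : F U
        · simp only [h, if_true]
          exact mul_nonneg (pow_nonneg h0.le _) (pow_nonneg (by linarith) _)
        · simp [h]

lemma Wfun_lt_one {F : Finset ℕ → Bool} {s : Finset ℕ} {p : ℝ} (h0 : 0 < p) (h1 : p < 1)
    (hempty : F ∅ = false) : Wfun F s p < 1 := by
  have hc := Wfun_add_compl F s p
  have : 0 < Wfun (fun T => !(F T)) s p := by
    apply Wfun_pos h0 h1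
    exact ⟨∅, Finset.mem_powerset.2 (Finset.empty_subset s), by simp [hempty]⟩
  linarith

lemma Wfun_half {F : Finset ℕ → Bool} {s : Finset ℕ}
    (hI : ∀ T ⊆ s, F T = true → F (s \ T) = false) :
    Wfun F s (1/2 : ℝ) ≤ 1/2 := by
  classical
  set P := s.powerset.filter (fun T => F T = true) with hP
  have hWval : Wfun F s (1/2 : ℝ) = P.card * (1/2 : ℝ) ^ s.card := by
    unfold Wfun
    rw [Finset.sum_ite, Finset.sum_const_zero, add_zero, ← hP]
    rw [Finset.sum_congr rfl (fun T hT => ?_), Finset.sum_const, nsmul_eq_mul]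
    rw [Finset.mem_filter, Finset.mem_powerset] at hT
    have : (1 - (1/2 : ℝ)) = 1/2 := by norm_num
    rw [this, ← pow_add]
    congr 1
    have := Finset.card_le_card hT.1
    omega
  have hinj : Set.InjOn (fun T => s \ T) P := by
    intro T hT U hU h
    rw [hP, Finset.coe_filter] at hT hU
    simp only [Set.mem_setOf_eq, Finset.mem_powerset] at hT hU
    have := congrArg (fun V => s \ V) h
    simpa [Finset.sdiff_sdiff_eq_self hT.1, Finset.sdiff_sdiff_eq_self hU.1] using this
  have hdisj : Disjoint P (P.image (fun T => s \ T)) := by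
    rw [Finset.disjoint_right]
    intro U hU hU'
    rw [Finset.mem_image] at hU
    obtain ⟨T, hT, rfl⟩ := hU
    rw [hP, Finset.mem_filter, Finset.mem_powerset] at hT hU'
    exact absurd hU'.2 (by simp [hI T hT.1 hT.2])
  have hcard : 2 * P.card ≤ 2 ^ s.card := by
    have h1 : (P ∪ P.image (fun T => s \ T)).card = P.card + P.card := by
      rw [Finset.card_union_of_disjoint hdisj, Finset.card_image_of_injOn hinj]
    have h2 : (P ∪ P.image (fun T => s \ T)) ⊆ s.powerset := by
      apply Finset.union_subset
      · exact Finset.filter_subset _ _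
      · intro U hU
        rw [Finset.mem_image] at hU
        obtain ⟨T, _, rfl⟩ := hU
        exact Finset.mem_powerset.2 (Finset.sdiff_subset)
    have h3 := Finset.card_le_card h2
    rw [h1, Finset.card_powerset] at h3
    omega
  rw [hWval]
  have hcast : 2 * (P.card : ℝ) ≤ 2 ^ s.card := by exact_mod_cast hcard
  have hpow : (1/2 : ℝ) ^ s.card = (2 ^ s.card)⁻¹ := by
    rw [one_div, inv_pow]
  rw [hpow]
  rw [mul_inv_le_iff₀ (by positivity)]
  linarith

lemma Wfun_le_p {F : Finset ℕ → Bool} {s : Finset ℕ}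
    (hmono : ∀ ⦃T U : Finset ℕ⦄, T ⊆ U → F T = true → F U = true)
    (hI : ∀ T ⊆ s, F T = true → F (s \ T) = false)
    (hempty : F ∅ = false)
    {p : ℝ} (h0 : 0 ≤ p) (hp : p ≤ 1/2) : Wfun F s p ≤ p := by
  classical
  rcases eq_or_lt_of_le h0 with h | h0'
  · -- p = 0
    rw [← h]
    apply le_of_eq
    apply Finset.sum_eq_zero
    intro T _
    by_cases hT : T = ∅
    · simp [hT, hempty]
    · have : T.card ≠ 0 := by
        simpa [Finset.card_eq_zero] using hT
      simp [zero_pow this]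
  · by_cases hex : ∃ T ∈ s.powerset, F T = true
    · -- main case
      have hWpos : ∀ q : ℝ, 0 < q → q < 1 → 0 < Wfun F s q := fun q a b => Wfun_pos a b hex
      have hWlt1 : ∀ q : ℝ, 0 < q → q < 1 → Wfun F s q < 1 := fun q a b => Wfun_lt_one a b hempty
      set W := Wfun F s with hW
      set H : ℝ → ℝ := fun q =>
        Real.log (W q) - Real.log (1 - W q) - (Real.log q - Real.log (1-q)) with hH
      have hderiv : ∀ q : ℝ, 0 < q → q < 1 →
          HasDerivAt H (deriv W q / W q - (- deriv W q / (1 - W q))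
            - (q⁻¹ - (-1) / (1 - q))) q := by
        intro q hq0 hq1
        have hWq0 := hWpos q hq0 hq1
        have hWq1 := hWlt1 q hq0 hq1
        have hdW : HasDerivAt W (deriv W q) q := ((Wfun_diff F s) q).hasDerivAt
        have h1 : HasDerivAt (fun x => Real.log (W x)) (deriv W q / W q) q :=
          hdW.log (ne_of_gt hWq0)
        have h2 : HasDerivAt (fun x => Real.log (1 - W x)) (- deriv W q / (1 - W q)) q := by
          have := (hdW.const_sub 1).log (by linarith : 1 - W q ≠ 0)
          simpa using this
        have h3 : HasDerivAt (fun x : ℝ => Real.log x) q⁻¹ q := Real.hasDerivAt_log (ne_of_gt hq0)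
        have h4 : HasDerivAt (fun x : ℝ => Real.log (1-x)) ((-1) / (1 - q)) q := by
          have := (((hasDerivAt_id q).const_sub 1)).log (by linarith : 1 - q ≠ 0)
          simpa using this
        exact (h1.sub h2).sub (h3.sub h4)
      have hmonoH : MonotoneOn H (Set.Icc p (1/2)) := by
        apply monotoneOn_of_deriv_nonneg (convex_Icc p (1/2))
        · intro q hq
          rw [Set.mem_Icc] at hq
          exact ((hderiv q (lt_of_lt_of_le h0' hq.1) (by linarith)).differentiableAt).continuousAt.continuousWithinAt
        · intro q hq
          rw [interior_Icc, Set.mem_Ioo] at hq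
          exact ((hderiv q (by linarith) (by linarith)).differentiableAt).differentiableWithinAt
        · intro q hq
          rw [interior_Icc, Set.mem_Ioo] at hq
          have hq0 : 0 < q := by linarith
          have hq1 : q < 1 := by linarith
          rw [(hderiv q hq0 hq1).deriv]
          have hkey : W q * (1 - W q) ≤ q * (1 - q) * deriv W q :=
            Wfun_key hmono s hq0.le hq1.le
          have hWq0 := hWpos q hq0 hq1
          have hWq1 := hWlt1 q hq0 hq1
          have hne1 : W q ≠ 0 := ne_of_gt hWq0
          have hne2 : (1:ℝ) - W q ≠ 0 := by linarith
          have hne3 : q ≠ 0 := ne_of_gt hq0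
          have hne4 : (1:ℝ) - q ≠ 0 := by linarith
          have hdpos : 0 < deriv W q := by
            have h1 : 0 < W q * (1 - W q) := mul_pos hWq0 (by linarith)
            nlinarith [mul_pos hq0 (show (0:ℝ) < 1 - q by linarith)]
          have e1 : deriv W q / W q - (- deriv W q / (1 - W q))
              = deriv W q / (W q * (1 - W q)) := by
            field_simp
            ring
          have e2 : q⁻¹ - (-1) / (1-q) = 1 / (q * (1-q)) := by
            field_simp
            ring
          rw [e1, e2, sub_nonneg,
            div_le_div_iff₀ (mul_pos hq0 (by linarith)) (mul_pos hWq0 (by linarith))]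
          nlinarith
      have hle : H p ≤ H (1/2) := by
        apply hmonoH (Set.mem_Icc.2 ⟨le_refl p, hp⟩) (Set.mem_Icc.2 ⟨hp, le_refl _⟩) hp
      have hhalf : H (1/2) ≤ 0 := by
        have hWh0 := hWpos (1/2) (by norm_num) (by norm_num)
        have hWh : W (1/2) ≤ 1/2 := Wfun_half hI
        have hlog : Real.log (W (1/2)) ≤ Real.log (1 - W (1/2)) :=
          Real.log_le_log hWh0 (by linarith)
        simp only [hH]
        linarith
      have hfinal : Real.log (W p) - Real.log (1 - W p)
          ≤ Real.log p - Real.log (1-p) := by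
        have := le_trans hle hhalf
        simp only [hH] at this
        linarith
      by_contra hcon
      push_neg at hcon
      have hWp0 := hWpos p h0' (by linarith)
      have hWp1 := hWlt1 p h0' (by linarith)
      have l1 : Real.log p < Real.log (W p) := Real.log_lt_log h0' hcon
      have l2 : Real.log (1 - W p) < Real.log (1 - p) :=
        Real.log_lt_log (by linarith) (by linarith)
      linarith
    · -- no winning set
      push_neg at hex
      apply le_of_lt
      apply lt_of_le_of_lt _ h0'
      apply le_of_eq
      apply Finset.sum_eq_zero
      intro T hT
      have : F T = false := by simpa using hex T hT
      simp [this]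

lemma Wfun_eq_filter (F : Finset ℕ → Bool) (s : Finset ℕ) (p : ℝ) :
    Wfun F s p = ∑ T ∈ s.powerset.filter (fun T => F T = true),
      p ^ T.card * (1-p) ^ (s.card - T.card) := by
  classical
  unfold Wfun
  rw [Finset.sum_ite, Finset.sum_const_zero, add_zero]

end BoldPlayAux


/-- **Threshold `t = 1/2`: two equal stakes are optimal.** If `p ≤ 1/2`, then for any
nonnegative stake sequence `(c i)` summing to `1` placed on iid Bernoulli(p) bets,
`P(∑ c i * β i ≥ 1/2) ≤ p + (1-p)p`, with equality for `c 0 = c 1 = 1/2`. -/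
theorem boldPlay_optimal_threshold_half {Ω : Type*} [MeasurableSpace Ω]
    (μ : Measure Ω) [IsProbabilityMeasure μ] (p : ℝ)
    (β : ℕ → Ω → ℝ) (hmeas : ∀ i, Measurable (β i))
    (hval : ∀ i ω, β i ω = 0 ∨ β i ω = 1)
    (hβp : ∀ i, μ {ω | β i ω = 1} = ENNReal.ofReal p)
    (hindep : iIndepFun β μ)
    (hp0 : 0 ≤ p) (hp : p ≤ 1 / 2) :
    (∀ c : ℕ → ℝ, (∀ i, 0 ≤ c i) → (∑' i, c i) = 1 →
      (μ {ω | (1 : ℝ) / 2 ≤ ∑' i, c i * β i ω}).toReal ≤ p + (1 - p) * p) ∧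
    (μ {ω | (1 : ℝ) / 2 ≤ (1 / 2) * β 0 ω + (1 / 2) * β 1 ω}).toReal
      = p + (1 - p) * p := by
  classical
  have hp1 : p ≤ 1 := by linarith
  have hmeas1 : ∀ i, MeasurableSet (β i ⁻¹' ({1} : Set ℝ)) :=
    fun i => (hmeas i) (measurableSet_singleton 1)
  have hmeas0 : ∀ i, MeasurableSet (β i ⁻¹' ({0} : Set ℝ)) :=
    fun i => (hmeas i) (measurableSet_singleton 0)
  have hμ1 : ∀ i, μ (β i ⁻¹' ({1} : Set ℝ)) = ENNReal.ofReal p := by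
    intro i
    rw [← hβp i]
    rfl
  have hcompl : ∀ i, β i ⁻¹' ({0} : Set ℝ) = (β i ⁻¹' ({1} : Set ℝ))ᶜ := by
    intro i
    ext ω
    simp only [Set.mem_preimage, Set.mem_singleton_iff, Set.mem_compl_iff]
    rcases hval i ω with h | h <;> simp [h]
  have hμ0 : ∀ i, μ (β i ⁻¹' ({0} : Set ℝ)) = ENNReal.ofReal (1-p) := by
    intro i
    rw [hcompl i, measure_compl (hmeas1 i) (measure_ne_top μ _), hμ1 i, measure_univ,
      ← ENNReal.ofReal_one, ← ENNReal.ofReal_sub _ hp0]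
  constructor
  · -- main bound
    intro c hc0 hc1
    -- summability
    have hsumc : Summable c := by
      by_contra hns
      rw [tsum_eq_zero_of_not_summable hns] at hc1
      norm_num at hc1
    -- an index with positive weight
    obtain ⟨a, ha⟩ : ∃ a, 0 < c a := by
      by_contra hno
      push_neg at hno
      have : c = fun _ => 0 := funext fun i => le_antisymm (hno i) (hc0 i)
      rw [this] at hc1
      simp at hc1
      -- hc1 : (0:ℝ) = 1 false
    -- pick N
    have htend := hsumc.hasSum.tendsto_sum_nat
    rw [hc1] at htend
    obtain ⟨N₀, hN₀⟩ := ((htend.eventually (eventually_gt_nhds (by linarith :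
        1 - c a < 1))).and (Filter.eventually_ge_atTop (a+1))).exists
    set N := N₀ with hNdef
    have haN : a ∈ Finset.range N := Finset.mem_range.2 (by omega)
    have hNsum : 1 - c a < ∑ i ∈ Finset.range N, c i := hN₀.1
    set ε : ℝ := 1 - ∑ i ∈ Finset.range N, c i with hε
    have hε0 : 0 ≤ ε := by
      have := Summable.sum_le_tsum (Finset.range N) (fun i _ => hc0 i) hsumc
      rw [hc1] at this
      simp only [hε]
      linarith
    have hεa : ε < c a := by simp only [hε]; linarith
    have hca1 : c a ≤ 1 := by
      have h1 : c a ≤ ∑ i ∈ Finset.range N, c i :=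
        Finset.single_le_sum (fun i _ => hc0 i) haN
      simp only [hε] at hε0
      linarith
    have hεhalf : ε < 1/2 := by
      have h1 : c a ≤ ∑ i ∈ Finset.range N, c i :=
        Finset.single_le_sum (fun i _ => hc0 i) haN
      simp only [hε]
      linarith
    set s : Finset ℕ := (Finset.range N).erase a with hsdef
    have has : a ∉ s := Finset.notMem_erase a _
    have hssum : ∑ i ∈ s, c i = (∑ i ∈ Finset.range N, c i) - c a := by
      have := Finset.sum_erase_add (Finset.range N) c haN
      simp only [hsdef]
      linarith
    set t : ℝ := 1/2 - ε with htdef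
    have ht0 : 0 < t := by simp only [htdef]; linarith
    set F : Finset ℕ → Bool := fun T => decide (t ≤ ∑ i ∈ T, c i) with hFdef
    have hFmono : ∀ ⦃T U : Finset ℕ⦄, T ⊆ U → F T = true → F U = true := by
      intro T U hTU hT
      simp only [hFdef, decide_eq_true_eq] at hT ⊢
      exact le_trans hT (Finset.sum_le_sum_of_subset_of_nonneg hTU (fun i _ _ => hc0 i))
    have hFinter : ∀ T ⊆ s, F T = true → F (s \ T) = false := by
      intro T hTs hT
      simp only [hFdef, decide_eq_true_eq] at hT
      simp only [hFdef, decide_eq_false_iff_not, not_le]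
      have hsd : ∑ i ∈ s \ T, c i + ∑ i ∈ T, c i = ∑ i ∈ s, c i :=
        Finset.sum_sdiff hTs
      have : ∑ i ∈ s, c i = 1 - ε - c a := by rw [hssum]; simp only [hε]; ring
      simp only [htdef] at hT ⊢
      linarith
    have hFempty : F ∅ = false := by
      simp only [hFdef, Finset.sum_empty, decide_eq_false_iff_not, not_le]
      exact decide_eq_false (not_le.2 ht0)
    -- the W bound
    have hWle : Wfun F s p ≤ p := Wfun_le_p hFmono hFinter hFempty hp0 hp
    -- events
    set Win : Set Ω := {ω | (1:ℝ)/2 ≤ ∑' i, c i * β i ω} with hWin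
    set A : Set Ω := β a ⁻¹' ({1} : Set ℝ) with hA
    set Efin : Set Ω := {ω | β a ω = 0 ∧ t ≤ ∑ i ∈ s, c i * β i ω} with hEfin
    have hsplit : μ Win = μ (Win ∩ A) + μ (Win \ A) :=
      (measure_inter_add_diff Win (hmeas1 a)).symm
    have hWinA : μ (Win ∩ A) ≤ ENNReal.ofReal p := by
      rw [← hμ1 a]
      exact measure_mono Set.inter_subset_right
    -- inclusion of the losing branch
    have hsub : Win \ A ⊆ Efin := by
      rintro ω ⟨hω, hωA⟩
      have hβa0 : β a ω = 0 := by
        rcases hval a ω with h | h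
        · exact h
        · exact absurd h hωA
      constructor
      · exact hβa0
      · -- tsum estimate
        have hsummul : Summable (fun i => c i * β i ω) := by
          apply Summable.of_nonneg_of_le (fun i => ?_) (fun i => ?_) hsumc
          · rcases hval i ω with h | h <;> simp [h, hc0 i]
          · rcases hval i ω with h | h <;> simp [h, hc0 i]
        have hsplit2 : (∑ i ∈ Finset.range N, c i * β i ω)
            + ∑' (i : {x // x ∉ Finset.range N}), c i * β i ω = ∑' i, c i * β i ω :=
          Summable.sum_add_tsum_subtype_compl hsummul (Finset.range N)
        have htail : ∑' (i : {x // x ∉ Finset.range N}), c i * β i ω ≤ ε := by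
          have h1 : ∑' (i : {x // x ∉ Finset.range N}), c i * β i ω
              ≤ ∑' (i : {x // x ∉ Finset.range N}), c i := by
            apply (hsummul.subtype _).tsum_le_tsum _ (hsumc.subtype _)
            intro i
            rcases hval i ω with h | h <;> simp [h, hc0 i.1]
          have h2 : (∑ i ∈ Finset.range N, c i)
              + ∑' (i : {x // x ∉ Finset.range N}), c i = 1 := by
            rw [← hc1]
            exact Summable.sum_add_tsum_subtype_compl hsumc (Finset.range N)
          simp only [hε]
          linarith
        have hrange : ∑ i ∈ Finset.range N, c i * β i ω
            = ∑ i ∈ s, c i * β i ω := by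
          have := Finset.sum_erase_add (Finset.range N) (fun i => c i * β i ω) haN
          simp only [hβa0, mul_zero, add_zero] at this
          simp only [hsdef]
          linarith
        have hωWin : (1:ℝ)/2 ≤ ∑' i, c i * β i ω := hω
        simp only [htdef]
        linarith
    -- atoms
    set P : Finset (Finset ℕ) := s.powerset.filter (fun T => F T = true) with hP
    set atom : Finset ℕ → Set Ω := fun T =>
      ⋂ i ∈ insert a s, β i ⁻¹' (if i ∈ T then ({1} : Set ℝ) else {0}) with hatom
    have hatom_meas : ∀ T, MeasurableSet (atom T) := by
      intro T
      apply Finset.measurableSet_biInter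
      intro i _
      by_cases h : i ∈ T <;> simp only [h, if_true, if_false] <;>
        [exact hmeas1 i; exact hmeas0 i]
    have hEdecomp : Efin = ⋃ T ∈ P, atom T := by
      ext ω
      simp only [hEfin, Set.mem_setOf_eq, Set.mem_iUnion]
      constructor
      · rintro ⟨hβa0, hts⟩
        refine ⟨s.filter (fun i => β i ω = 1), ?_, ?_⟩
        · rw [hP, Finset.mem_filter, Finset.mem_powerset]
          refine ⟨Finset.filter_subset _ _, ?_⟩
          simp only [hFdef, decide_eq_true_eq]
          have : ∑ i ∈ s, c i * β i ω = ∑ i ∈ s.filter (fun i => β i ω = 1), c i := by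
            rw [Finset.sum_filter]
            apply Finset.sum_congr rfl
            intro i _
            rcases hval i ω with h | h <;> simp [h]
          linarith
        · simp only [hatom, Set.mem_iInter, Set.mem_preimage]
          intro i hi
          rw [Finset.mem_insert] at hi
          rcases hi with rfl | hi
          · have : i ∉ s.filter (fun j => β j ω = 1) :=
              fun h => has (Finset.mem_of_mem_filter i h)
            simp [this, hβa0]
          · by_cases h : i ∈ s.filter (fun j => β j ω = 1)
            · rw [Finset.mem_filter] at h
              simp [h.1, h.2, Finset.mem_filter]
            · have hne : ¬ (i ∈ s ∧ β i ω = 1) := by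
                exact fun hc => h (Finset.mem_filter.2 hc)
              have : β i ω = 0 := by
                rcases hval i ω with h0 | h1
                · exact h0
                · exact absurd ⟨hi, h1⟩ hne
              simp only [Finset.mem_filter]
              simp [hne, this]
      · rintro ⟨T, hTP, hωT⟩
        rw [hP, Finset.mem_filter, Finset.mem_powerset] at hTP
        obtain ⟨hTs, hFT⟩ := hTP
        simp only [hatom, Set.mem_iInter, Set.mem_preimage] at hωT
        have hβa0 : β a ω = 0 := by
          have := hωT a (Finset.mem_insert_self a s)
          have haT : a ∉ T := fun h => has (hTs h)
          simpa [haT] using this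
        refine ⟨hβa0, ?_⟩
        have hsum : ∑ i ∈ s, c i * β i ω = ∑ i ∈ T, c i := by
          rw [← Finset.sum_sdiff hTs]
          have h1 : ∀ i ∈ s \ T, c i * β i ω = 0 := by
            intro i hi
            rw [Finset.mem_sdiff] at hi
            have := hωT i (Finset.mem_insert_of_mem hi.1)
            simp only [hi.2, if_false, Set.mem_singleton_iff] at this
            rw [this, mul_zero]
          have h2 : ∀ i ∈ T, c i * β i ω = c i := by
            intro i hi
            have := hωT i (Finset.mem_insert_of_mem (hTs hi))
            simp only [hi, if_true, Set.mem_singleton_iff] at this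
            rw [this, mul_one]
          rw [Finset.sum_congr rfl h1, Finset.sum_congr rfl h2]
          simp
        rw [hsum]
        simp only [hFdef, decide_eq_true_eq] at hFT
        exact hFT
    -- disjointness
    have hdisj : (P : Set (Finset ℕ)).PairwiseDisjoint atom := by
      intro T hT U hU hTU
      simp only [Finset.coe_filter, Set.mem_setOf_eq, Finset.mem_powerset, hP] at hT hU
      apply Set.disjoint_left.2
      intro ω hωT hωU
      apply hTU
      ext i
      constructor
      · intro hiT
        have his : i ∈ s := hT.1 hiT
        have h1 := Set.mem_iInter.1 (Set.mem_iInter.1 hωT i)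
            (Finset.mem_insert_of_mem his)
        have h2 := Set.mem_iInter.1 (Set.mem_iInter.1 hωU i)
            (Finset.mem_insert_of_mem his)
        simp only [Set.mem_preimage, hiT, if_true, Set.mem_singleton_iff] at h1
        by_contra hiU
        simp only [Set.mem_preimage, hiU, if_false, Set.mem_singleton_iff] at h2
        rw [h1] at h2
        norm_num at h2
      · intro hiU
        have his : i ∈ s := hU.1 hiU
        have h1 := Set.mem_iInter.1 (Set.mem_iInter.1 hωT i)
            (Finset.mem_insert_of_mem his)
        have h2 := Set.mem_iInter.1 (Set.mem_iInter.1 hωU i)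
            (Finset.mem_insert_of_mem his)
        simp only [Set.mem_preimage, hiU, if_true, Set.mem_singleton_iff] at h2
        by_contra hiT
        simp only [Set.mem_preimage, hiT, if_false, Set.mem_singleton_iff] at h1
        rw [h2] at h1
        norm_num at h1
    -- atom measures
    have hatomμ : ∀ T ∈ P, μ (atom T)
        = ENNReal.ofReal ((1-p) * (p ^ T.card * (1-p) ^ (s.card - T.card))) := by
      intro T hTP
      rw [hP, Finset.mem_filter, Finset.mem_powerset] at hTP
      obtain ⟨hTs, _⟩ := hTP
      have haT : a ∉ T := fun h => has (hTs h)
      have hprod := hindep.measure_inter_preimage_eq_mul (S := insert a s)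
        (sets := fun i => if i ∈ T then ({1} : Set ℝ) else {0})
        (fun i _ => by by_cases h : i ∈ T <;>
          simp [h, measurableSet_singleton])
      rw [hatom]
      rw [hprod, Finset.prod_insert has]
      have hfac : ∀ i ∈ s, μ (β i ⁻¹' (if i ∈ T then ({1} : Set ℝ) else {0}))
          = ENNReal.ofReal (if i ∈ T then p else 1-p) := by
        intro i _
        by_cases h : i ∈ T <;> simp [h, hμ1 i, hμ0 i]
      rw [Finset.prod_congr rfl hfac]
      have haval : μ (β a ⁻¹' (if a ∈ T then ({1} : Set ℝ) else {0}))
          = ENNReal.ofReal (1-p) := by simp [haT, hμ0 a]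
      rw [haval, ← ENNReal.ofReal_prod_of_nonneg (fun i _ => by
        by_cases h : i ∈ T <;> simp [h] <;> linarith)]
      rw [← ENNReal.ofReal_mul (by linarith)]
      congr 1
      congr 1
      rw [← Finset.prod_sdiff hTs]
      have e1 : ∀ i ∈ s \ T, (if i ∈ T then p else 1-p) = 1-p := by
        intro i hi
        rw [Finset.mem_sdiff] at hi
        simp [hi.2]
      have e2 : ∀ i ∈ T, (if i ∈ T then p else 1-p) = p := by
        intro i hi
        simp [hi]
      rw [Finset.prod_congr rfl e1, Finset.prod_congr rfl e2,
        Finset.prod_const, Finset.prod_const, Finset.card_sdiff_of_subset hTs]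
      ring
    -- measure of Efin
    have hEμ : μ Efin = ENNReal.ofReal ((1-p) * Wfun F s p) := by
      rw [hEdecomp, measure_biUnion_finset hdisj (fun T _ => hatom_meas T)]
      rw [Finset.sum_congr rfl hatomμ]
      rw [← ENNReal.ofReal_sum_of_nonneg (fun T _ => by
        have h1 : (0:ℝ) ≤ p ^ T.card * (1-p) ^ (s.card - T.card) :=
          mul_nonneg (pow_nonneg hp0 _) (pow_nonneg (by linarith) _)
        nlinarith)]
      congr 1
      rw [Wfun_eq_filter, Finset.mul_sum]
    -- put together
    have hfinal : μ Win ≤ ENNReal.ofReal (p + (1-p) * p) := by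
      rw [hsplit]
      have h2 : μ (Win \ A) ≤ ENNReal.ofReal ((1-p) * Wfun F s p) := by
        rw [← hEμ]
        exact measure_mono hsub
      calc μ (Win ∩ A) + μ (Win \ A)
          ≤ ENNReal.ofReal p + ENNReal.ofReal ((1-p) * Wfun F s p) :=
            add_le_add hWinA h2
        _ = ENNReal.ofReal (p + (1-p) * Wfun F s p) := by
            rw [← ENNReal.ofReal_add hp0 (mul_nonneg (by linarith)
              (Wfun_nonneg hp0 hp1))]
        _ ≤ ENNReal.ofReal (p + (1-p) * p) := by
            apply ENNReal.ofReal_le_ofReal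
            nlinarith
    calc (μ Win).toReal ≤ (ENNReal.ofReal (p + (1-p)*p)).toReal :=
          ENNReal.toReal_mono ENNReal.ofReal_ne_top hfinal
      _ = p + (1-p)*p := ENNReal.toReal_ofReal (by nlinarith)
  · -- equality for two equal stakes
    have hset : {ω | (1:ℝ)/2 ≤ (1/2) * β 0 ω + (1/2) * β 1 ω}
        = (β 0 ⁻¹' ({1} : Set ℝ)) ∪ (β 1 ⁻¹' ({1} : Set ℝ)) := by
      ext ω
      simp only [Set.mem_setOf_eq, Set.mem_union, Set.mem_preimage, Set.mem_singleton_iff]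
      constructor
      · intro h
        by_contra hc
        push_neg at hc
        have h0 : β 0 ω = 0 := (hval 0 ω).resolve_right hc.1
        have h1 : β 1 ω = 0 := (hval 1 ω).resolve_right hc.2
        rw [h0, h1] at h
        norm_num at h
      · intro h
        rcases h with h | h
        · rw [h]
          rcases hval 1 ω with h1 | h1 <;> rw [h1] <;> norm_num
        · rw [h]
          rcases hval 0 ω with h0 | h0 <;> rw [h0] <;> norm_num
    rw [hset]
    have hind : IndepFun (β 0) (β 1) μ := hindep.indepFun (by norm_num)
    have hinter : μ ((β 0 ⁻¹' ({1}:Set ℝ)) ∩ (β 1 ⁻¹' ({1}:Set ℝ)))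
        = ENNReal.ofReal p * ENNReal.ofReal p := by
      rw [hind.measure_inter_preimage_eq_mul _ _ (measurableSet_singleton 1)
        (measurableSet_singleton 1), hμ1 0, hμ1 1]
    have hu := measure_union_add_inter (μ := μ) (β 0 ⁻¹' ({1}:Set ℝ)) (hmeas1 1)
    rw [hinter, hμ1 0, hμ1 1] at hu
    have := congrArg ENNReal.toReal hu
    rw [ENNReal.toReal_add (measure_ne_top μ _) (by
        exact (ENNReal.mul_lt_top ENNReal.ofReal_lt_top ENNReal.ofReal_lt_top).ne),
      ENNReal.toReal_add ENNReal.ofReal_ne_top ENNReal.ofReal_ne_top,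
      ENNReal.toReal_mul, ENNReal.toReal_ofReal hp0] at this
    linarith
end

section
/- For every integer a > 1 and every positive integer k, P(Bin((k+1)a, 1/a) ≥ k+1) < P(Bin(ka, 1/a) ≥ k); that is, the probability of getting at least k successes in ka trials with success probability 1/a is strictly decreasing in k. -/
open Finset

namespace CB

noncomputable def W (a n j : ℕ) : ℝ :=
  (n.choose j : ℝ) * (1 / a) ^ j * (1 - 1 / a) ^ (n - j)

lemma p_pos {a : ℕ} (ha : 1 < a) : 0 < (1 / (a : ℝ)) := by
  have : (0:ℝ) < a := by exact_mod_cast Nat.lt_of_lt_of_le Nat.zero_lt_one ha.le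
  positivity

lemma q_pos {a : ℕ} (ha : 1 < a) : 0 < 1 - 1 / (a : ℝ) := by
  have h0 : (0:ℝ) < a := by exact_mod_cast Nat.lt_of_lt_of_le Nat.zero_lt_one ha.le
  have : (1 : ℝ) / a < 1 := by
    rw [div_lt_one h0]; exact_mod_cast ha
  linarith

lemma W_nonneg {a : ℕ} (ha : 1 < a) (n j : ℕ) : 0 ≤ W a n j := by
  have := (p_pos ha).le
  have := (q_pos ha).le
  unfold W; positivity

lemma W_pos {a : ℕ} (ha : 1 < a) {n j : ℕ} (h : j ≤ n) : 0 < W a n j := by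
  have hc : 0 < (n.choose j : ℝ) := by exact_mod_cast Nat.choose_pos h
  have := p_pos ha
  have := q_pos ha
  unfold W; positivity

lemma W_zero {a n j : ℕ} (h : n < j) : W a n j = 0 := by
  unfold W
  rw [Nat.choose_eq_zero_of_lt h]
  simp

lemma W_sum_one {a : ℕ} (ha : 1 < a) (n : ℕ) :
    ∑ j ∈ range (n + 1), W a n j = 1 := by
  have h := add_pow (1 / (a:ℝ)) (1 - 1 / a) n
  have hpq : (1 / (a:ℝ)) + (1 - 1 / a) = 1 := by ring
  rw [hpq, one_pow] at h
  rw [h]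
  exact Finset.sum_congr rfl fun j _ => by unfold W; ring

lemma W_mean {a : ℕ} (ha : 1 < a) :
    ∑ j ∈ range (a + 1), (j : ℝ) * W a a j = 1 := by
  have ha0 : (a : ℝ) ≠ 0 := by positivity
  rw [Finset.sum_range_succ']
  simp only [Nat.cast_zero, zero_mul, add_zero]
  have key : ∀ i : ℕ, ((i : ℝ) + 1) * W a a (i + 1) = a * (1 / a) * W a (a - 1) i := by
    intro i
    unfold W
    have hc : (a : ℕ) * (a - 1).choose i = a.choose (i + 1) * (i + 1) := by
      have := Nat.add_one_mul_choose_eq (a - 1) i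
      rwa [Nat.sub_add_cancel (by omega : 1 ≤ a)] at this
    have hcr : (a : ℝ) * ((a - 1).choose i : ℝ) = (a.choose (i + 1) : ℝ) * ((i : ℝ) + 1) := by
      exact_mod_cast hc
    have he : a - (i + 1) = (a - 1) - i := by omega
    rw [he]
    calc ((i : ℝ) + 1) * ((a.choose (i+1) : ℝ) * (1 / a) ^ (i+1) * (1 - 1/a) ^ ((a-1) - i))
        = ((a.choose (i + 1) : ℝ) * ((i : ℝ) + 1)) * ((1 / a) ^ (i+1) * (1 - 1/a) ^ ((a-1) - i)) := by ring
      _ = ((a:ℝ) * ((a - 1).choose i : ℝ)) * ((1 / a) ^ (i+1) * (1 - 1/a) ^ ((a-1) - i)) := by rw [hcr]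
      _ = a * (1 / a) * (((a-1).choose i : ℝ) * (1 / a) ^ i * (1 - 1/a) ^ ((a-1) - i)) := by ring
  calc ∑ i ∈ range a, ((i + 1 : ℕ) : ℝ) * W a a (i + 1)
      = ∑ i ∈ range a, (a : ℝ) * (1 / a) * W a (a - 1) i := by
        refine Finset.sum_congr rfl fun i _ => ?_
        have := key i; push_cast at this ⊢; linarith
    _ = (a : ℝ) * (1 / a) * ∑ i ∈ range a, W a (a - 1) i := by rw [Finset.mul_sum]
    _ = 1 := by
        have : range a = range ((a - 1) + 1) := by congr 1; omega
        rw [this, W_sum_one ha]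
        field_simp

lemma W_conv {a : ℕ} (ha : 1 < a) (n m j : ℕ) :
    W a (n + m) j = ∑ il ∈ Finset.HasAntidiagonal.antidiagonal j, W a n il.1 * W a m il.2 := by
  unfold W
  rw [Nat.add_choose_eq]
  push_cast
  rw [Finset.sum_mul, Finset.sum_mul]
  refine Finset.sum_congr rfl fun il hil => ?_
  obtain ⟨i, l⟩ := il
  simp only [Finset.HasAntidiagonal.mem_antidiagonal] at hil
  subst hil
  by_cases hi : i ≤ n
  · by_cases hl : l ≤ m
    · have he : n + m - (i + l) = (n - i) + (m - l) := by omega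
      rw [he, pow_add, pow_add]
      ring
    · rw [Nat.choose_eq_zero_of_lt (show m < l by omega)]
      simp
  · rw [Nat.choose_eq_zero_of_lt (show n < i by omega)]
    simp

lemma W_step {a k i : ℕ} (ha : 1 < a) (hik : i + 1 ≤ k) :
    W a (k * a) i < W a (k * a) (i + 1) := by
  set n := k * a with hn
  have hin : i + 1 ≤ n := by
    calc i + 1 ≤ k := hik
      _ ≤ k * a := Nat.le_mul_of_pos_right k (by omega)
  have hq := q_pos ha
  have hp := p_pos ha
  have ha0 : (0:ℝ) < a := by exact_mod_cast (by omega : 0 < a)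
  -- key identity: (i+1) * q * W n (i+1) = (n - i) * p * W n i
  have key : ((i : ℝ) + 1) * (1 - 1/a) * W a n (i + 1)
      = ((n - i : ℕ) : ℝ) * (1 / a) * W a n i := by
    unfold W
    have hc : n.choose (i + 1) * (i + 1) = n.choose i * (n - i) := Nat.choose_succ_right_eq n i
    have hcr : (n.choose (i + 1) : ℝ) * ((i : ℝ) + 1) = (n.choose i : ℝ) * ((n - i : ℕ) : ℝ) := by
      exact_mod_cast hc
    have he : n - i = (n - (i + 1)) + 1 := by omega
    calc ((i : ℝ) + 1) * (1 - 1/a) * ((n.choose (i+1) : ℝ) * (1/a)^(i+1) * (1 - 1/a)^(n - (i+1)))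
        = ((n.choose (i+1) : ℝ) * ((i:ℝ)+1)) * ((1/a)^(i+1) * ((1 - 1/a)^(n - (i+1)) * (1 - 1/a))) := by ring
      _ = ((n.choose i : ℝ) * ((n - i : ℕ):ℝ)) * ((1/a)^(i+1) * (1 - 1/a)^(n - i)) := by
          rw [hcr, he]; ring
      _ = ((n - i : ℕ) : ℝ) * (1/a) * ((n.choose i : ℝ) * (1/a)^i * (1 - 1/a)^(n - i)) := by
          rw [pow_succ]; ring
  -- the ratio inequality: (i+1) * q < (n - i) * p
  have hratio : ((i : ℝ) + 1) * (1 - 1/a) < ((n - i : ℕ) : ℝ) * (1 / a) := by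
    have h1 : (i + 1) * a ≤ k * a := Nat.mul_le_mul_right a hik
    have e1 : (i + 1) * (a - 1) + (i + 1) = (i + 1) * a := by
      rw [← Nat.mul_succ]; congr 1; omega
    have h2 : (i + 1) * (a - 1) + i + 1 ≤ n := by
      calc (i + 1) * (a - 1) + i + 1 = (i + 1) * (a - 1) + (i + 1) := by
            rw [Nat.add_assoc]
        _ = (i + 1) * a := e1
        _ ≤ k * a := h1
    have h3 : ((i + 1) * (a - 1) + i + 1 : ℕ) ≤ (n : ℕ) := h2
    have h4 : (((i + 1) * (a - 1) : ℕ) : ℝ) = ((i:ℝ) + 1) * ((a:ℝ) - 1) := by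
      push_cast [Nat.cast_sub (by omega : 1 ≤ a)]; ring
    have h5 : ((i:ℝ) + 1) * ((a:ℝ) - 1) + i + 1 ≤ (n : ℝ) := by
      have := h3
      have : (((i + 1) * (a - 1) + i + 1 : ℕ) : ℝ) ≤ (n : ℝ) := by exact_mod_cast h3
      push_cast [Nat.cast_sub (by omega : 1 ≤ a)] at this
      linarith
    have h6 : ((n - i : ℕ) : ℝ) = (n : ℝ) - i := by
      rw [Nat.cast_sub (by omega : i ≤ n)]
    have e2 : ((i:ℝ) + 1) * (1 - 1/a) = (((i:ℝ)+1) * ((a:ℝ)-1)) / a := by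
      field_simp
    have e3 : ((n - i : ℕ) : ℝ) * (1 / a) = ((n:ℝ) - i) / a := by
      rw [h6]; ring
    rw [e2, e3, div_lt_div_iff₀ ha0 ha0]
    nlinarith [h5]
  have hWi := W_pos ha (show i ≤ n by omega)
  have step1 : ((i : ℝ) + 1) * (1 - 1/a) * W a n i < ((n - i : ℕ) : ℝ) * (1 / a) * W a n i :=
    mul_lt_mul_of_pos_right hratio hWi
  rw [← key] at step1
  have hpos : 0 < ((i : ℝ) + 1) * (1 - 1/a) := by positivity
  exact lt_of_mul_lt_mul_left step1 hpos.le

lemma W_lt {a k : ℕ} (ha : 1 < a) : ∀ {j i : ℕ}, j ≤ k → i < j → W a (k * a) i < W a (k * a) j := by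
  intro j
  induction j with
  | zero => intro i hj hi; omega
  | succ m ih =>
    intro i hj hi
    rcases Nat.lt_succ_iff_lt_or_eq.mp hi with h | h
    · exact (ih (by omega) h).trans (W_step ha hj)
    · subst h; exact W_step ha hj

noncomputable def G (a m : ℕ) : ℝ := ∑ l ∈ range m, W a a l
noncomputable def T (a m : ℕ) : ℝ := 1 - G a m

lemma G_full {a : ℕ} (ha : 1 < a) {m : ℕ} (h : a + 1 ≤ m) : G a m = 1 := by
  unfold G
  rw [Finset.range_eq_Ico, ← Finset.sum_Ico_consecutive _ (Nat.zero_le (a+1)) h,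
    ← Finset.range_eq_Ico]
  rw [W_sum_one ha]
  have : ∑ l ∈ Ico (a+1) m, W a a l = 0 :=
    Finset.sum_eq_zero fun l hl => W_zero (by have := (Finset.mem_Ico.mp hl).1; omega)
  rw [this]; ring

lemma T_eq {a : ℕ} (ha : 1 < a) (m : ℕ) : T a m = ∑ l ∈ Ico m (a + 1), W a a l := by
  unfold T G
  by_cases h : m ≤ a + 1
  · have h1 : ∑ l ∈ Ico 0 m, W a a l + ∑ l ∈ Ico m (a+1), W a a l = 1 := by
      rw [Finset.sum_Ico_consecutive (fun l => W a a l) (Nat.zero_le m) h, ← Finset.range_eq_Ico]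
      exact W_sum_one ha a
    rw [← Finset.range_eq_Ico] at h1
    linarith
  · have he : Ico m (a+1) = ∅ := Finset.Ico_eq_empty (by omega)
    rw [he, Finset.sum_empty]
    have : G a m = 1 := G_full ha (by omega)
    unfold G at this; linarith

lemma T_nonneg {a : ℕ} (ha : 1 < a) (m : ℕ) : 0 ≤ T a m := by
  rw [T_eq ha]
  exact Finset.sum_nonneg fun l _ => W_nonneg ha a l

lemma T_zero {a : ℕ} (ha : 1 < a) {m : ℕ} (h : a + 1 ≤ m) : T a m = 0 := by
  rw [T_eq ha, Finset.Ico_eq_empty (by omega), Finset.sum_empty]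

lemma T2_pos {a : ℕ} (ha : 1 < a) : 0 < T a 2 := by
  rw [T_eq ha]
  refine Finset.sum_pos' (fun l _ => W_nonneg ha a l) ⟨2, Finset.mem_Ico.mpr ⟨le_rfl, by omega⟩, W_pos ha ha⟩

lemma T_sum {a : ℕ} (ha : 1 < a) : ∑ m ∈ Ico 2 (a + 1), T a m = W a a 0 := by
  have S1 : ∑ m ∈ Ico 1 (a + 1), T a m = 1 := by
    have e1 : ∑ m ∈ Ico 1 (a + 1), T a m
        = ∑ m ∈ Ico 1 (a + 1), ∑ l ∈ Ico m (a + 1), W a a l :=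
      Finset.sum_congr rfl fun m _ => T_eq ha m
    have e2 : ∑ m ∈ Ico 1 (a + 1), ∑ l ∈ Ico m (a + 1), W a a l
        = ∑ l ∈ Ico 1 (a + 1), ∑ m ∈ Ico 1 (l + 1), W a a l :=
      Finset.sum_Ico_Ico_comm 1 (a + 1) fun _ l => W a a l
    have e3 : ∑ l ∈ Ico 1 (a + 1), ∑ m ∈ Ico 1 (l + 1), W a a l
        = ∑ l ∈ Ico 1 (a + 1), (l : ℝ) * W a a l := by
      refine Finset.sum_congr rfl fun l hl => ?_
      rw [Finset.sum_const, Nat.card_Ico]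
      simp [nsmul_eq_mul]
    have e4 : ∑ l ∈ Ico 1 (a + 1), (l : ℝ) * W a a l = 1 := by
      have := W_mean ha
      rw [Finset.range_eq_Ico, Finset.sum_eq_sum_Ico_succ_bot (by omega : 0 < a + 1)] at this
      simpa using this
    rw [e1, e2, e3, e4]
  have hT1 : T a 1 = 1 - W a a 0 := by
    unfold T G; rw [Finset.sum_range_one]
  rw [Finset.sum_eq_sum_Ico_succ_bot (by omega : 1 < a + 1)] at S1
  rw [hT1] at S1
  linarith

lemma head_tail {a : ℕ} (ha : 1 < a) (m N : ℕ) (h : N ≤ m + 1) :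
    ∑ j ∈ Icc N m, W a m j = 1 - ∑ j ∈ range N, W a m j := by
  have h1 : ∑ j ∈ Ico 0 N, W a m j + ∑ j ∈ Ico N (m+1), W a m j = ∑ j ∈ Ico 0 (m+1), W a m j :=
    Finset.sum_Ico_consecutive (fun j => W a m j) (Nat.zero_le N) h
  rw [← Finset.range_eq_Ico, ← Finset.range_eq_Ico] at h1
  rw [← Finset.Ico_add_one_right_eq_Icc]
  rw [W_sum_one ha m] at h1
  linarith

end CB

/-- **Chaundy–Bullard theorem (Pepys–Newton problem).** For every integer `a > 1` and
positive integer `k`, `P(Bin((k+1)a, 1/a) ≥ k+1) < P(Bin(ka, 1/a) ≥ k)`: the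
probability of at least `k` successes in `ka` trials with success probability `1/a`
is strictly decreasing in `k`. -/
theorem binomial_tail_strict_anti (a k : ℕ) (ha : 1 < a) (hk : 0 < k) :
    (∑ j ∈ Finset.Icc (k + 1) ((k + 1) * a),
        (Nat.choose ((k + 1) * a) j : ℝ) * (1 / a) ^ j * (1 - 1 / a) ^ ((k + 1) * a - j))
      <
    (∑ j ∈ Finset.Icc k (k * a),
        (Nat.choose (k * a) j : ℝ) * (1 / a) ^ j * (1 - 1 / a) ^ (k * a - j)) := by
  open CB in
  show ∑ j ∈ Finset.Icc (k + 1) ((k + 1) * a), CB.W a ((k+1)*a) j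
      < ∑ j ∈ Finset.Icc k (k * a), CB.W a (k*a) j
  set n := k * a with hn
  have ha0 : 0 < a := by omega
  have hkn : k ≤ n := Nat.le_mul_of_pos_right k ha0
  have hka : (k + 1) * a = n + a := by rw [hn]; ring
  rw [CB.head_tail ha ((k+1)*a) (k+1) (by rw [hka]; omega),
      CB.head_tail ha n k (by omega)]
  have main : ∑ j ∈ range k, CB.W a n j < ∑ j ∈ range (k + 1), CB.W a ((k+1)*a) j := by
    -- convolution decomposition
    have conv : ∑ j ∈ range (k + 1), CB.W a ((k+1)*a) j
        = ∑ i ∈ range (k + 1), CB.W a n i * CB.G a (k + 1 - i) := by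
      calc ∑ j ∈ range (k + 1), CB.W a ((k+1)*a) j
          = ∑ j ∈ range (k + 1), ∑ il ∈ Finset.HasAntidiagonal.antidiagonal j, CB.W a n il.1 * CB.W a a il.2 := by
            refine Finset.sum_congr rfl fun j _ => ?_
            rw [hka]; exact CB.W_conv ha n a j
        _ = ∑ j ∈ range (k + 1), ∑ i ∈ range (j + 1), CB.W a n i * CB.W a a (j - i) := by
            refine Finset.sum_congr rfl fun j _ => ?_
            rw [Finset.Nat.sum_antidiagonal_eq_sum_range_succ_mk]
        _ = ∑ i ∈ range (k + 1), ∑ j ∈ Ico i (k + 1), CB.W a n i * CB.W a a (j - i) := by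
            simp only [Finset.range_eq_Ico]
            exact (Finset.sum_Ico_Ico_comm 0 (k+1) (fun i j => CB.W a n i * CB.W a a (j - i))).symm
        _ = ∑ i ∈ range (k + 1), CB.W a n i * CB.G a (k + 1 - i) := by
            refine Finset.sum_congr rfl fun i _ => ?_
            rw [← Finset.mul_sum]
            congr 1
            rw [Finset.sum_Ico_eq_sum_range]
            exact Finset.sum_congr rfl fun l _ => by congr 1; omega
    -- difference
    have dec : ∑ i ∈ range (k + 1), CB.W a n i * CB.G a (k + 1 - i)
        - ∑ i ∈ range k, CB.W a n i
        = CB.W a n k * CB.W a a 0 - ∑ i ∈ range k, CB.W a n i * CB.T a (k + 1 - i) := by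
      rw [Finset.sum_range_succ]
      have h1 : k + 1 - k = 1 := by omega
      have hG1 : CB.G a 1 = CB.W a a 0 := by unfold CB.G; rw [Finset.sum_range_one]
      rw [h1, hG1]
      have h2 : ∀ i ∈ range k, CB.W a n i * CB.T a (k + 1 - i)
          = CB.W a n i - CB.W a n i * CB.G a (k + 1 - i) := fun i _ => by unfold CB.T; ring
      rw [Finset.sum_congr rfl h2, Finset.sum_sub_distrib]
      ring
    -- reflect
    have hrefl : ∑ i ∈ range k, CB.W a n i * CB.T a (k + 1 - i)
        = ∑ j ∈ range k, CB.W a n (k - 1 - j) * CB.T a (j + 2) := by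
      rw [← Finset.sum_range_reflect (fun i => CB.W a n i * CB.T a (k + 1 - i)) k]
      refine Finset.sum_congr rfl fun j hj => ?_
      have hj' : j < k := Finset.mem_range.mp hj
      have : k + 1 - (k - 1 - j) = j + 2 := by omega
      rw [this]
    -- bounds
    have hb1 : ∑ j ∈ range k, CB.W a n (k - 1 - j) * CB.T a (j + 2)
        < ∑ j ∈ range k, CB.W a n k * CB.T a (j + 2) := by
      apply Finset.sum_lt_sum
      · intro j hj
        exact mul_le_mul_of_nonneg_right (CB.W_lt ha le_rfl (by omega)).le (CB.T_nonneg ha _)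
      · refine ⟨0, Finset.mem_range.mpr hk, ?_⟩
        exact mul_lt_mul_of_pos_right (CB.W_lt ha le_rfl (by omega)) (CB.T2_pos ha)
    have hTsum : ∑ j ∈ range k, CB.T a (j + 2) ≤ CB.W a a 0 := by
      have e1 : ∑ j ∈ range k, CB.T a (j + 2) = ∑ m ∈ Ico 2 (k + 2), CB.T a m := by
        rw [Finset.sum_Ico_eq_sum_range]
        have : k + 2 - 2 = k := by omega
        rw [this]
        exact Finset.sum_congr rfl fun l _ => by congr 1; omega
      rw [e1]
      by_cases h : k + 2 ≤ a + 1
      · rw [← CB.T_sum ha]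
        refine Finset.sum_le_sum_of_subset_of_nonneg (Finset.Ico_subset_Ico le_rfl h)
          fun m _ _ => CB.T_nonneg ha m
      · have hs : ∑ m ∈ Ico 2 (a + 1), CB.T a m + ∑ m ∈ Ico (a+1) (k+2), CB.T a m
            = ∑ m ∈ Ico 2 (k + 2), CB.T a m :=
          Finset.sum_Ico_consecutive _ (by omega) (by omega)
        have hz : ∑ m ∈ Ico (a+1) (k+2), CB.T a m = 0 :=
          Finset.sum_eq_zero fun m hm => CB.T_zero ha (Finset.mem_Ico.mp hm).1
        rw [← hs, hz, CB.T_sum ha]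
        simp
    have hb2 : ∑ j ∈ range k, CB.W a n k * CB.T a (j + 2) ≤ CB.W a n k * CB.W a a 0 := by
      rw [← Finset.mul_sum]
      exact mul_le_mul_of_nonneg_left hTsum (CB.W_pos ha hkn).le
    rw [conv]
    have := hrefl
    linarith [dec, hb1, hb2, hrefl]
  linarith [main, hka ▸ main]
end
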